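/- Let λ₁ ≤ λ₂ ≤ ... ≤ λ_N be real numbers, Ω > 0 and S ≥ 0 with S ≤ NΩ. Suppose that for the real number k = S/Ω, writing m = ⌊k⌋, one has λ₁ + λ₂ + ... + λ_m + (k − m)λ_{m+1} ≥ 0 (i.e., the sequence is k-nonnegative). Then every weighted sum ∑ ω_α λ_α with weights 0 ≤ ω_α ≤ Ω and ∑ ω_α = S is nonnegative. -/

import Mathlib

open Finset

/-- k-nonnegativity with `k = S/Ω` implies nonnegativity of every weighted sum
with weights in `[0, Ω]` and total weight `S` (NPW Lemma 3.4, second part). -/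
theorem k_nonneg_implies_weighted_sum_nonneg (N : ℕ) (lam ω : ℕ → ℝ) (Ω S : ℝ)
    (hmono : Monotone lam)
    (hΩ : 0 < Ω) (hS0 : 0 ≤ S) (hSN : S ≤ N * Ω)
    (hk : ∑ α ∈ range ⌊S / Ω⌋₊, lam α + (S / Ω - ⌊S / Ω⌋₊) * lam ⌊S / Ω⌋₊ ≥ 0)
    (hω0 : ∀ α, 0 ≤ ω α) (hωΩ : ∀ α, ω α ≤ Ω)
    (hsum : ∑ α ∈ range N, ω α = S) :
    0 ≤ ∑ α ∈ range N, ω α * lam α := by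
  set k : ℝ := S / Ω with hkdef
  set m : ℕ := ⌊k⌋₊ with hmdef
  have hk0 : 0 ≤ k := div_nonneg hS0 hΩ.le
  have hkN : k ≤ (N : ℝ) := (div_le_iff₀ hΩ).mpr hSN
  have hmk : (m : ℝ) ≤ k := Nat.floor_le hk0
  have hkm1 : k < m + 1 := Nat.lt_floor_add_one k
  have hmN : m ≤ N := by
    have := Nat.floor_le_floor hkN
    simpa using this
  have hkΩ : k * Ω = S := div_mul_cancel₀ S hΩ.ne'
  -- the extremal weight
  set w : ℕ → ℝ := fun α => if α < m then Ω else if α = m then (k - m) * Ω else 0 with hw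
  have hwlt : ∀ x, x < m → w x = Ω := by
    intro x h; simp only [hw]; rw [if_pos h]
  have hwm : w m = (k - m) * Ω := by
    simp [hw]
  have hwgt : ∀ x, m < x → w x = 0 := by
    intro x h; simp only [hw]; rw [if_neg (by omega), if_neg (by omega)]
  -- partial sums of w
  have hPle : ∀ j, j ≤ m → ∑ α ∈ range j, w α = j * Ω := by
    intro j hj
    rw [Finset.sum_congr rfl (fun x hx => hwlt x (lt_of_lt_of_le (mem_range.mp hx) hj)),
      Finset.sum_const, card_range, nsmul_eq_mul]
  have hPgt : ∀ j, m < j → ∑ α ∈ range j, w α = S := by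
    intro j hj
    have hsub : ∑ α ∈ range j, w α = ∑ α ∈ range (m + 1), w α := by
      refine (Finset.sum_subset (range_subset_range.mpr hj) ?_).symm
      intro x hx hx'
      simp only [mem_range, not_lt] at hx'
      exact hwgt x (by omega)
    rw [hsub, Finset.sum_range_succ, hPle m le_rfl, hwm, ← hkΩ]
    ring
  -- total sum of w is S
  have hwsum : ∑ α ∈ range N, w α = S := by
    rcases lt_or_eq_of_le hmN with h | h
    · exact hPgt N h
    · have hkm : k = m := le_antisymm (h ▸ hkN) hmk
      rw [hPle N h.symm.le, ← hkΩ, hkm, h]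
  -- partial sums of ω are ≤ partial sums of w
  have hD : ∀ j, j ≤ N → ∑ α ∈ range j, (ω α - w α) ≤ 0 := by
    intro j hj
    rw [Finset.sum_sub_distrib, sub_nonpos]
    rcases le_or_gt j m with h | h
    · rw [hPle j h]
      calc ∑ α ∈ range j, ω α ≤ ∑ α ∈ range j, Ω :=
            Finset.sum_le_sum fun i _ => hωΩ i
        _ = j * Ω := by rw [Finset.sum_const, card_range, nsmul_eq_mul]
    · rw [hPgt j h, ← hsum]
      exact Finset.sum_le_sum_of_subset_of_nonneg (range_subset_range.mpr hj)
        (fun i _ _ => hω0 i)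
  -- the extremal weighted sum is nonnegative
  have hwlam : 0 ≤ ∑ α ∈ range N, w α * lam α := by
    have key : ∑ α ∈ range N, w α * lam α
        = Ω * (∑ α ∈ range m, lam α + (k - m) * lam m) := by
      rcases lt_or_eq_of_le hmN with h | h
      · have hsub : ∑ α ∈ range N, w α * lam α = ∑ α ∈ range (m + 1), w α * lam α := by
          refine (Finset.sum_subset (range_subset_range.mpr h) ?_).symm
          intro x hx hx'
          simp only [mem_range, not_lt] at hx'
          rw [hwgt x (by omega), zero_mul]
        rw [hsub, Finset.sum_range_succ, hwm,
          Finset.sum_congr rfl (fun x hx => by rw [hwlt x (mem_range.mp hx)]),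
          mul_add, Finset.mul_sum]
        ring
      · have hkm : k = m := le_antisymm (h ▸ hkN) hmk
        rw [Finset.sum_congr rfl (fun x hx => by rw [hwlt x (h ▸ mem_range.mp hx)]),
          hkm, sub_self, zero_mul, add_zero, Finset.mul_sum, h]
    rw [key]
    exact mul_nonneg hΩ.le hk
  -- Abel summation on the difference
  have habel : 0 ≤ ∑ α ∈ range N, lam α * (ω α - w α) := by
    have := Finset.sum_range_by_parts lam (fun α => ω α - w α) N
    simp only [smul_eq_mul] at this
    rw [this]
    have h1 : ∑ i ∈ range N, (ω i - w i) = 0 := by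
      rw [Finset.sum_sub_distrib, hsum, hwsum, sub_self]
    rw [h1, mul_zero, zero_sub, le_neg, neg_zero]
    refine Finset.sum_nonpos fun i hi => ?_
    have hiN : i + 1 ≤ N := by have := mem_range.mp hi; omega
    exact mul_nonpos_of_nonneg_of_nonpos (sub_nonneg.mpr (hmono (Nat.le_succ i)))
      (hD (i + 1) hiN)
  have expand : ∑ α ∈ range N, ω α * lam α
      = ∑ α ∈ range N, lam α * (ω α - w α) + ∑ α ∈ range N, w α * lam α := by
    rw [← Finset.sum_add_distrib]
    exact Finset.sum_congr rfl fun i _ => by ring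
  rw [expand]
  exact add_nonneg habel hwlam
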